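/- Let M be a symmetric n×n matrix whose comparison matrix M̄ is positive definite (so M̄ is a Stieltjes matrix). Then M itself is positive definite, and for any d > 0 with M̄ d > 0, the vector p = (1/2)(M + M̄)d is strictly positive and satisfies M_{αα}^{-1} p_α ≥ 0 for every nonempty α ⊆ [n]. -/

import Mathlib

open Matrix

/-- The comparison matrix of a square matrix. -/
def comparisonMatrix {n : Type*} [DecidableEq n] (M : Matrix n n ℝ) : Matrix n n ℝ :=
  fun i j => if i = j then M i i else -|M i j|

namespace StieltjesAux

open Finset

variable {n : ℕ}

noncomputable def solv (M : Matrix (Fin n) (Fin n) ℝ) (β : Finset (Fin n)) (y : Fin n → ℝ) :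
    Fin n → ℝ :=
  fun i => if h : i ∈ β then
    ((M.submatrix (Subtype.val : {x // x ∈ β} → Fin n) Subtype.val)⁻¹ *ᵥ
      (fun b : {x // x ∈ β} => y b)) ⟨i, h⟩ else 0

lemma solv_zero (M : Matrix (Fin n) (Fin n) ℝ) (β : Finset (Fin n)) (y : Fin n → ℝ)
    {i : Fin n} (hi : i ∉ β) : solv M β y i = 0 := dif_neg hi

lemma sum_restrict (s : Finset (Fin n)) (f v : Fin n → ℝ) (hv : ∀ j, j ∉ s → v j = 0) :
    ∑ j, f j * v j = ∑ j ∈ s, f j * v j :=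
  (Finset.sum_subset (Finset.subset_univ s) (fun j _ hj => by rw [hv j hj, mul_zero])).symm

lemma sum_restrict' (s : Finset (Fin n)) (f v : Fin n → ℝ) (hv : ∀ j, j ∉ s → v j = 0) :
    ∑ j, v j * f j = ∑ j ∈ s, v j * f j :=
  (Finset.sum_subset (Finset.subset_univ s) (fun j _ hj => by rw [hv j hj, zero_mul])).symm

lemma posDef_submatrix (M : Matrix (Fin n) (Fin n) ℝ) (hM : M.PosDef) (β : Finset (Fin n)) :
    (M.submatrix (Subtype.val : {x // x ∈ β} → Fin n) Subtype.val).PosDef := by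
  classical
  refine Matrix.PosDef.of_dotProduct_mulVec_pos (hM.1.submatrix _) ?_
  intro x hx
  set x' : Fin n → ℝ := fun i => if h : i ∈ β then x ⟨i, h⟩ else 0 with hx'def
  have hx'0 : ∀ j, j ∉ β → x' j = 0 := fun j hj => dif_neg hj
  have hx'ne : x' ≠ 0 := by
    obtain ⟨b, hb⟩ := Function.ne_iff.mp hx
    refine Function.ne_iff.mpr ⟨(b : Fin n), ?_⟩
    have h1 : x' (b : Fin n) = x b := by simp [hx'def]
    simpa [h1] using hb
  have hpos := hM.dotProduct_mulVec_pos hx'ne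
  rw [star_trivial] at hpos
  rw [star_trivial]
  have hform : x' ⬝ᵥ (M *ᵥ x') =
      x ⬝ᵥ ((M.submatrix (Subtype.val : {x // x ∈ β} → Fin n) Subtype.val) *ᵥ x) := by
    simp only [dotProduct, Matrix.mulVec, Matrix.submatrix_apply]
    rw [sum_restrict' β (fun i => ∑ j, M i j * x' j) x' hx'0, ← Finset.sum_coe_sort]
    refine Finset.sum_congr rfl fun b _ => ?_
    have h1 : x' (b : Fin n) = x b := by simp [hx'def]
    rw [h1]
    congr 1
    rw [sum_restrict β (fun j => M (b : Fin n) j) x' hx'0, ← Finset.sum_coe_sort]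
    refine Finset.sum_congr rfl fun c _ => ?_
    have h2 : x' (c : Fin n) = x c := by simp [hx'def]
    rw [h2]
  rw [← hform]
  exact hpos

lemma solv_spec (M : Matrix (Fin n) (Fin n) ℝ) (hM : M.PosDef) (β : Finset (Fin n))
    (y : Fin n → ℝ) : ∀ i ∈ β, ∑ j ∈ β, M i j * solv M β y j = y i := by
  intro i hi
  set A := M.submatrix (Subtype.val : {x // x ∈ β} → Fin n) Subtype.val with hA
  have hApd : A.PosDef := posDef_submatrix M hM β
  have hdet : IsUnit A.det := hApd.det_pos.ne'.isUnit
  have h1 : A * A⁻¹ = 1 := Matrix.mul_nonsing_inv A hdet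
  have hstep : ∑ j ∈ β, M i j * solv M β y j =
      ∑ b : {x // x ∈ β}, A ⟨i, hi⟩ b * (A⁻¹ *ᵥ (fun b : {x // x ∈ β} => y b)) b := by
    rw [← Finset.sum_coe_sort β (fun j => M i j * solv M β y j)]
    refine Finset.sum_congr rfl fun b _ => ?_
    have : solv M β y (b : Fin n) = (A⁻¹ *ᵥ (fun b : {x // x ∈ β} => y b)) b := by
      simp only [solv, dif_pos b.2, ← hA, Subtype.coe_eta]
    rw [this, hA, Matrix.submatrix_apply]
  rw [hstep]
  have h2 : ∑ b : {x // x ∈ β}, A ⟨i, hi⟩ b * (A⁻¹ *ᵥ (fun b : {x // x ∈ β} => y b)) b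
      = (A *ᵥ (A⁻¹ *ᵥ (fun b : {x // x ∈ β} => y b))) ⟨i, hi⟩ := rfl
  rw [h2, Matrix.mulVec_mulVec, h1, Matrix.one_mulVec]

lemma solv_unique (M : Matrix (Fin n) (Fin n) ℝ) (hM : M.PosDef) (β : Finset (Fin n))
    (q q' : Fin n → ℝ)
    (h : ∀ i ∈ β, ∑ j ∈ β, M i j * q j = ∑ j ∈ β, M i j * q' j) :
    ∀ i ∈ β, q i = q' i := by
  set A := M.submatrix (Subtype.val : {x // x ∈ β} → Fin n) Subtype.val with hA
  have hApd : A.PosDef := posDef_submatrix M hM β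
  have hdet : IsUnit A.det := hApd.det_pos.ne'.isUnit
  have h2 : A⁻¹ * A = 1 := Matrix.nonsing_inv_mul A hdet
  set u : {x // x ∈ β} → ℝ := fun b => q b - q' b with hu
  have hAu : A *ᵥ u = 0 := by
    funext b
    have e1 : (A *ᵥ u) b = ∑ c : {x // x ∈ β}, M b c * (q c - q' c) := rfl
    rw [e1]
    have e2 : ∑ c : {x // x ∈ β}, M (b : Fin n) c * (q c - q' c)
        = ∑ j ∈ β, M (b : Fin n) j * (q j - q' j) :=
      Finset.sum_coe_sort β (fun j => M (b : Fin n) j * (q j - q' j))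
    rw [e2]
    have e3 := h b b.2
    simp only [mul_sub, Finset.sum_sub_distrib]
    rw [e3]
    simp
  have hu0 : u = 0 := by
    have : A⁻¹ *ᵥ (A *ᵥ u) = u := by
      rw [Matrix.mulVec_mulVec, h2, Matrix.one_mulVec]
    rw [← this, hAu, Matrix.mulVec_zero]
  intro i hi
  have := congrFun hu0 ⟨i, hi⟩
  simpa [hu, sub_eq_zero] using this

lemma sum_le_of_superset_nonpos {s t : Finset (Fin n)} (h : t ⊆ s) {f : Fin n → ℝ}
    (hf : ∀ j ∈ s, f j ≤ 0) : ∑ j ∈ s, f j ≤ ∑ j ∈ t, f j := by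
  have := Finset.sum_le_sum_of_subset_of_nonneg (f := fun j => -f j) h
    (fun j hj _ => neg_nonneg.2 (hf j hj))
  simp only [Finset.sum_neg_distrib] at this
  linarith

lemma key (M : Matrix (Fin n) (Fin n) ℝ) (hsym : M.IsSymm) (hM : M.PosDef)
    (d : Fin n → ℝ) (hd : ∀ i, 0 < d i) :
    ∀ β : Finset (Fin n), ∀ y q : Fin n → ℝ,
      (∀ a ∈ β, ∑ j ∈ β.erase a, max (M a j) 0 * d j ≤ y a) →
      (∀ a ∈ β, y a ≤ M a a * d a + ∑ j ∈ β.erase a, min (M a j) 0 * d j) →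
      (∀ i ∈ β, ∑ j ∈ β, M i j * q j = y i) →
      ∀ a ∈ β, 0 ≤ q a ∧ q a ≤ d a := by
  intro β
  induction β using Finset.strongInduction with
  | _ β ih =>
  intro y q hL hU hq a ha
  have hMsym : ∀ i j, M i j = M j i := fun i j => (congrFun (congrFun hsym j) i).symm ▸ rfl
  set β' := β.erase a with hβ'
  have hss : β' ⊂ β := Finset.erase_ssubset ha
  have hna : a ∉ β' := Finset.notMem_erase a β
  set r := solv M β' y with hrdef
  set w := solv M β' (fun i => M i a) with hwdef
  set r' := solv M β' (fun i => y i - M i a * d a) with hr'def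
  have hr := solv_spec M hM β' y
  have hw := solv_spec M hM β' (fun i => M i a)
  have hr'eq := solv_spec M hM β' (fun i => y i - M i a * d a)
  -- restricted conditions for y on β'
  have hL' : ∀ b ∈ β', ∑ j ∈ β'.erase b, max (M b j) 0 * d j ≤ y b := by
    intro b hb
    have hbβ : b ∈ β := Finset.mem_of_mem_erase hb
    refine le_trans ?_ (hL b hbβ)
    refine Finset.sum_le_sum_of_subset_of_nonneg
      (Finset.erase_subset_erase b (Finset.erase_subset a β)) ?_
    intro j _ _
    exact mul_nonneg (le_max_right _ _) (hd j).le
  have hU' : ∀ b ∈ β', y b ≤ M b b * d b + ∑ j ∈ β'.erase b, min (M b j) 0 * d j := by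
    intro b hb
    have hbβ : b ∈ β := Finset.mem_of_mem_erase hb
    refine le_trans (hU b hbβ) ?_
    have : ∑ j ∈ β.erase b, min (M b j) 0 * d j ≤ ∑ j ∈ β'.erase b, min (M b j) 0 * d j :=
      sum_le_of_superset_nonpos (Finset.erase_subset_erase b (Finset.erase_subset a β))
        (fun j _ => mul_nonpos_of_nonpos_of_nonneg (min_le_right _ _) (hd j).le)
    linarith
  have hrb := ih β' hss y r hL' hU' hr
  -- conditions for y' := y - M · a * d a on β'
  have hL'' : ∀ b ∈ β', ∑ j ∈ β'.erase b, max (M b j) 0 * d j ≤ y b - M b a * d a := by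
    intro b hb
    have hbβ : b ∈ β := Finset.mem_of_mem_erase hb
    have hba : b ≠ a := Finset.ne_of_mem_erase hb
    have haeb : a ∈ β.erase b := Finset.mem_erase.2 ⟨fun h => hba h.symm, ha⟩
    have hsplit : ∑ j ∈ (β.erase b).erase a, max (M b j) 0 * d j + max (M b a) 0 * d a
        = ∑ j ∈ β.erase b, max (M b j) 0 * d j :=
      Finset.sum_erase_add _ _ haeb
    have hcomm : (β.erase b).erase a = β'.erase b := by
      rw [hβ', Finset.erase_right_comm]
    rw [hcomm] at hsplit
    have h1 := hL b hbβ
    have h2 : M b a * d a ≤ max (M b a) 0 * d a :=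
      mul_le_mul_of_nonneg_right (le_max_left _ _) (hd a).le
    linarith
  have hU'' : ∀ b ∈ β', y b - M b a * d a
      ≤ M b b * d b + ∑ j ∈ β'.erase b, min (M b j) 0 * d j := by
    intro b hb
    have hbβ : b ∈ β := Finset.mem_of_mem_erase hb
    have hba : b ≠ a := Finset.ne_of_mem_erase hb
    have haeb : a ∈ β.erase b := Finset.mem_erase.2 ⟨fun h => hba h.symm, ha⟩
    have hsplit : ∑ j ∈ (β.erase b).erase a, min (M b j) 0 * d j + min (M b a) 0 * d a
        = ∑ j ∈ β.erase b, min (M b j) 0 * d j :=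
      Finset.sum_erase_add _ _ haeb
    have hcomm : (β.erase b).erase a = β'.erase b := by
      rw [hβ', Finset.erase_right_comm]
    rw [hcomm] at hsplit
    have h1 := hU b hbβ
    have h2 : min (M b a) 0 * d a ≤ M b a * d a :=
      mul_le_mul_of_nonneg_right (min_le_left _ _) (hd a).le
    linarith
  have hr'b := ih β' hss _ r' hL'' hU'' hr'eq
  -- relation r = r' + d a • w on β'
  have hrr' : ∀ j ∈ β', r j = r' j + d a * w j := by
    refine solv_unique M hM β' r (fun j => r' j + d a * w j) ?_
    intro i hi
    have e1 : ∑ j ∈ β', M i j * (r' j + d a * w j)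
        = ∑ j ∈ β', M i j * r' j + d a * ∑ j ∈ β', M i j * w j := by
      rw [Finset.mul_sum]
      rw [← Finset.sum_add_distrib]
      refine Finset.sum_congr rfl fun j _ => by ring
    rw [hr i hi, e1, hr'eq i hi, hw i hi]
    ring
  -- relation q = r - q a • w on β'
  have hq' : ∀ j ∈ β', q j = r j - q a * w j := by
    refine solv_unique M hM β' q (fun j => r j - q a * w j) ?_
    intro i hi
    have hiβ : i ∈ β := Finset.mem_of_mem_erase hi
    have hsplitq : ∑ j ∈ β', M i j * q j + M i a * q a = ∑ j ∈ β, M i j * q j :=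
      Finset.sum_erase_add _ _ ha
    have e1 : ∑ j ∈ β', M i j * (r j - q a * w j)
        = ∑ j ∈ β', M i j * r j - q a * ∑ j ∈ β', M i j * w j := by
      rw [Finset.mul_sum, ← Finset.sum_sub_distrib]
      refine Finset.sum_congr rfl fun j _ => by ring
    rw [e1, hr i hi, hw i hi]
    linarith [hsplitq, hq i hiβ]
  have hw0 : ∀ j, j ∉ β' → w j = 0 := fun j hj => solv_zero M β' _ hj
  have hwa : w a = 0 := hw0 a hna
  set t := ∑ j ∈ β', M a j * w j with htdef
  -- Schur complement positivity : 0 < M a a - t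
  have hs : 0 < M a a - t := by
    set z : Fin n → ℝ := Pi.single a 1 - w with hzdef
    have hz0 : z ≠ 0 := by
      refine Function.ne_iff.mpr ⟨a, ?_⟩
      simp [hzdef, hwa]
    have hpos := hM.dotProduct_mulVec_pos hz0
    rw [star_trivial] at hpos
    have hMe : M *ᵥ Pi.single a (1:ℝ) = fun i => M i a := by
      funext i
      simp [Matrix.mulVec, dotProduct, Pi.single_apply]
    have e1 : Pi.single a (1:ℝ) ⬝ᵥ (M *ᵥ Pi.single a (1:ℝ)) = M a a := by
      rw [hMe]; simp [dotProduct, Pi.single_apply]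
    have e2 : Pi.single a (1:ℝ) ⬝ᵥ (M *ᵥ w) = t := by
      have : (M *ᵥ w) a = t := by
        show ∑ j, M a j * w j = t
        rw [sum_restrict β' _ _ hw0]
      simp [dotProduct, Pi.single_apply, this]
    have e3 : w ⬝ᵥ (M *ᵥ Pi.single a (1:ℝ)) = t := by
      rw [hMe]
      show ∑ i, w i * M i a = t
      rw [sum_restrict' β' (fun i => M i a) w hw0]
      refine Finset.sum_congr rfl fun i _ => by rw [hMsym i a]; ring
    have e4 : w ⬝ᵥ (M *ᵥ w) = t := by
      show ∑ i, w i * (M *ᵥ w) i = t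
      rw [sum_restrict' β' (fun i => (M *ᵥ w) i) w hw0]
      refine Finset.sum_congr rfl fun i hi => ?_
      have : (M *ᵥ w) i = M i a := by
        show ∑ j, M i j * w j = M i a
        rw [sum_restrict β' _ _ hw0]
        exact hw i hi
      rw [this, hMsym i a]; ring
    have hzz : z ⬝ᵥ (M *ᵥ z) = M a a - t := by
      rw [hzdef, Matrix.mulVec_sub, sub_dotProduct, dotProduct_sub, dotProduct_sub,
        e1, e2, e3, e4]
      ring
    linarith [hzz ▸ hpos]
  -- the pivot row identity
  have hrowsum : ∑ j ∈ β', M a j * q j + M a a * q a = y a :=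
    (Finset.sum_erase_add β _ ha).trans (hq a ha)
  have hqrow : ∑ j ∈ β', M a j * q j = ∑ j ∈ β', M a j * r j - q a * t := by
    rw [htdef, Finset.mul_sum, ← Finset.sum_sub_distrib]
    refine Finset.sum_congr rfl fun j hj => by rw [hq' j hj]; ring
  have hrow : y a = q a * (M a a - t) + ∑ j ∈ β', M a j * r j := by
    rw [← hrowsum, hqrow]; ring
  constructor
  · -- lower bound
    have h1 : ∑ j ∈ β', M a j * r j ≤ ∑ j ∈ β', max (M a j) 0 * d j := by
      refine Finset.sum_le_sum fun j hj => ?_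
      obtain ⟨h0, hdj⟩ := hrb j hj
      rcases le_total (M a j) 0 with hm | hm
      · have := mul_nonpos_of_nonpos_of_nonneg hm h0
        have hmx : max (M a j) 0 = 0 := max_eq_right hm
        nlinarith [(hd j).le]
      · rw [max_eq_left hm]
        exact mul_le_mul_of_nonneg_left hdj hm
    have h2 := hL a ha
    rw [← hβ'] at h2
    have h3 : 0 ≤ q a * (M a a - t) := by linarith [hrow]
    nlinarith [hs, h3]
  · -- upper bound
    have hsumr : ∑ j ∈ β', M a j * r j = ∑ j ∈ β', M a j * r' j + d a * t := by
      rw [htdef, Finset.mul_sum, ← Finset.sum_add_distrib]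
      refine Finset.sum_congr rfl fun j hj => by rw [hrr' j hj]; ring
    have h1 : ∑ j ∈ β', min (M a j) 0 * d j ≤ ∑ j ∈ β', M a j * r' j := by
      refine Finset.sum_le_sum fun j hj => ?_
      obtain ⟨h0, hdj⟩ := hr'b j hj
      rcases le_total (M a j) 0 with hm | hm
      · rw [min_eq_left hm]
        nlinarith
      · have hmn : min (M a j) 0 = 0 := min_eq_right hm
        nlinarith
    have h2 := hU a ha
    rw [← hβ'] at h2
    have h3 : q a * (M a a - t) ≤ d a * (M a a - t) := by
      have := hrow
      rw [hsumr] at this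
      linarith
    nlinarith [hs, h3]


end StieltjesAux

open StieltjesAux Finset in
theorem stieltjes_comparison_n_step_vector
    {n : ℕ} (M : Matrix (Fin n) (Fin n) ℝ) (hsym : M.IsSymm)
    (hcmp : (comparisonMatrix M).PosDef) :
    M.PosDef ∧
      ∀ d : Fin n → ℝ, (∀ i, 0 < d i) →
        (∀ i, 0 < (comparisonMatrix M).mulVec d i) →
        ∀ p : Fin n → ℝ,
          (p = fun i => (1 / 2) * (M.mulVec d i + (comparisonMatrix M).mulVec d i)) →
          (∀ i, 0 < p i) ∧
            ∀ α : Finset (Fin n), α.Nonempty →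
              ∀ a : {x // x ∈ α},
                0 ≤ ((M.submatrix (Subtype.val : {x // x ∈ α} → Fin n)
                      (Subtype.val : {x // x ∈ α} → Fin n))⁻¹).mulVec
                    (fun b : {x // x ∈ α} => p (b : Fin n)) a := by
  have hcmE : ∀ i j, comparisonMatrix M i j = if i = j then M i i else -|M i j| :=
    fun _ _ => rfl
  -- M is positive definite
  have hMpd : M.PosDef := by
    refine Matrix.PosDef.of_dotProduct_mulVec_pos ?_ ?_
    · show Mᴴ = M
      ext i j
      rw [Matrix.conjTranspose_apply, star_trivial]
      exact (congrFun (congrFun hsym i) j : Mᵀ i j = M i j) ▸ rfl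
    · intro x hx
      have habs : (fun i => |x i|) ≠ 0 := by
        obtain ⟨i, hi⟩ := Function.ne_iff.mp hx
        exact Function.ne_iff.mpr ⟨i, by simpa using hi⟩
      have h1 := hcmp.dotProduct_mulVec_pos habs
      rw [star_trivial] at h1 ⊢
      refine lt_of_lt_of_le h1 ?_
      simp only [dotProduct, Matrix.mulVec, Finset.mul_sum]
      refine Finset.sum_le_sum fun i _ => Finset.sum_le_sum fun j _ => ?_
      rcases eq_or_ne i j with h | h
      · subst h
        rw [hcmE i i, if_pos rfl]
        have he : |x i| * (M i i * |x i|) = x i * (M i i * x i) := by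
          rw [show |x i| * (M i i * |x i|) = M i i * (|x i| * |x i|) by ring,
            abs_mul_abs_self]
          ring
        exact he.le
      · rw [hcmE i j, if_neg h]
        have : -(|M i j| * |x i| * |x j|) ≤ M i j * x j * x i := by
          have h2 : |M i j * x j * x i| = |M i j| * |x j| * |x i| := by
            rw [abs_mul, abs_mul]
          nlinarith [neg_abs_le (M i j * x j * x i), h2.le]
        nlinarith [this]
  refine ⟨hMpd, ?_⟩
  intro d hd hMd p hp
  have hmin : ∀ x : ℝ, x - |x| = 2 * min x 0 := by
    intro x
    rcases le_total x 0 with h | h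
    · rw [abs_of_nonpos h, min_eq_left h]; ring
    · rw [abs_of_nonneg h, min_eq_right h]; ring
  have hmaxmin : ∀ x : ℝ, max x 0 - min x 0 = |x| := by
    intro x
    rcases le_total x 0 with h | h
    · rw [abs_of_nonpos h, max_eq_right h, min_eq_left h]; ring
    · rw [abs_of_nonneg h, max_eq_left h, min_eq_right h]; ring
  -- formula for p
  have hpeq : ∀ a, p a = M a a * d a + ∑ j ∈ Finset.univ.erase a, min (M a j) 0 * d j := by
    intro a
    have h1 : (M *ᵥ d) a = ∑ j ∈ Finset.univ.erase a, M a j * d j + M a a * d a := by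
      show ∑ j, M a j * d j = _
      rw [Finset.sum_erase_add _ _ (Finset.mem_univ a)]
    have h2 : (comparisonMatrix M *ᵥ d) a
        = ∑ j ∈ Finset.univ.erase a, -(|M a j|) * d j + M a a * d a := by
      show ∑ j, comparisonMatrix M a j * d j = _
      rw [← Finset.sum_erase_add _ _ (Finset.mem_univ a)]
      congr 1
      · refine Finset.sum_congr rfl fun j hj => ?_
        rw [hcmE a j, if_neg (Finset.ne_of_mem_erase hj).symm]
      · rw [hcmE a a, if_pos rfl]
    rw [hp]
    simp only
    rw [h1, h2]
    rw [show (1/2 : ℝ) * (∑ j ∈ Finset.univ.erase a, M a j * d j + M a a * d a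
        + (∑ j ∈ Finset.univ.erase a, -(|M a j|) * d j + M a a * d a))
      = M a a * d a + (1/2) * ∑ j ∈ Finset.univ.erase a, (M a j * d j + -(|M a j|) * d j)
      from by rw [Finset.sum_add_distrib]; ring]
    congr 1
    rw [Finset.mul_sum]
    refine Finset.sum_congr rfl fun j hj => ?_
    linear_combination (d j / 2) * hmin (M a j)
  have hcmd : ∀ a, (comparisonMatrix M *ᵥ d) a
      = M a a * d a - ∑ j ∈ Finset.univ.erase a, |M a j| * d j := by
    intro a
    show ∑ j, comparisonMatrix M a j * d j = _
    rw [← Finset.sum_erase_add _ _ (Finset.mem_univ a), hcmE a a, if_pos rfl]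
    rw [show ∑ j ∈ Finset.univ.erase a, comparisonMatrix M a j * d j
        = -∑ j ∈ Finset.univ.erase a, |M a j| * d j from by
      rw [← Finset.sum_neg_distrib]
      refine Finset.sum_congr rfl fun j hj => ?_
      rw [hcmE a j, if_neg (Finset.ne_of_mem_erase hj).symm]; ring]
    ring
  -- positivity of p
  have hppos : ∀ i, 0 < p i := by
    intro i
    have h1 : (comparisonMatrix M *ᵥ d) i ≤ (M *ᵥ d) i := by
      show ∑ j, comparisonMatrix M i j * d j ≤ ∑ j, M i j * d j
      refine Finset.sum_le_sum fun j _ => ?_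
      rcases eq_or_ne i j with h | h
      · subst h; rw [hcmE i i, if_pos rfl]
      · rw [hcmE i j, if_neg h]
        nlinarith [neg_abs_le (M i j), (hd j).le, abs_nonneg (M i j)]
    have h2 := hMd i
    rw [hp]
    simp only
    linarith
  refine ⟨hppos, ?_⟩
  intro α hα a
  -- hypotheses of `key` for y = p on α
  have hL : ∀ b ∈ α, ∑ j ∈ α.erase b, max (M b j) 0 * d j ≤ p b := by
    intro b _
    have h1 : ∑ j ∈ α.erase b, max (M b j) 0 * d j
        ≤ ∑ j ∈ Finset.univ.erase b, max (M b j) 0 * d j := by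
      refine Finset.sum_le_sum_of_subset_of_nonneg
        (Finset.erase_subset_erase b (Finset.subset_univ α)) ?_
      intro j _ _
      exact mul_nonneg (le_max_right _ _) (hd j).le
    have h2 : ∑ j ∈ Finset.univ.erase b, max (M b j) 0 * d j
        - ∑ j ∈ Finset.univ.erase b, min (M b j) 0 * d j
        = ∑ j ∈ Finset.univ.erase b, |M b j| * d j := by
      rw [← Finset.sum_sub_distrib]
      refine Finset.sum_congr rfl fun j _ => ?_
      rw [← hmaxmin (M b j)]; ring
    have h3 := hMd b
    rw [hcmd b] at h3
    rw [hpeq b]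
    linarith
  have hU : ∀ b ∈ α, p b ≤ M b b * d b + ∑ j ∈ α.erase b, min (M b j) 0 * d j := by
    intro b _
    rw [hpeq b]
    have h1 : ∑ j ∈ Finset.univ.erase b, min (M b j) 0 * d j
        ≤ ∑ j ∈ α.erase b, min (M b j) 0 * d j := by
      have := Finset.sum_le_sum_of_subset_of_nonneg
        (f := fun j => -(min (M b j) 0 * d j))
        (Finset.erase_subset_erase b (Finset.subset_univ α))
        (fun j _ _ => by
          have h4 : min (M b j) 0 ≤ 0 := min_le_right _ _
          have h5 : (0:ℝ) ≤ d j := (hd j).le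
          show (0:ℝ) ≤ -((M b j ⊓ 0) * d j)
          nlinarith)
      simp only [Finset.sum_neg_distrib] at this
      linarith
    linarith
  have hsol := solv_spec M hMpd α p
  have hb := key M hsym hMpd d hd α p (solv M α p) hL hU hsol (a : Fin n) a.2
  have he : solv M α p (a : Fin n)
      = ((M.submatrix (Subtype.val : {x // x ∈ α} → Fin n) Subtype.val)⁻¹ *ᵥ
          (fun b : {x // x ∈ α} => p (b : Fin n))) a := by
    simp only [solv, dif_pos a.2, Subtype.coe_eta]
  rw [← he]
  exact hb.1
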